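/- Let F be a field, Q a finite quiver, and (A, b) a path algebra of Q over F. Suppose c₁ and c₂ are two distinct cycles of Q both starting and ending at the same vertex v (distinct as paths based at v). Then the unique F-algebra homomorphism φ : FreeAlgebra F (Fin 2) → A sending the two free generators to b(c₁) and b(c₂) respectively is injective; consequently A is not PI. -/

import Mathlib

structure Quiv where
  V : Type
  A : Type
  [fintV : Fintype V]
  [fintA : Fintype A]
  s : A → V
  t : A → V

attribute [instance] Quiv.fintV Quiv.fintA

inductive Quiv.IsPathFrom (Q : Quiv) : Q.V → List Q.A → Q.V → Prop
  | nil (v : Q.V) : Q.IsPathFrom v [] v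
  | cons {l : List Q.A} {v : Q.V} (a : Q.A) :
      Q.IsPathFrom (Q.t a) l v → Q.IsPathFrom (Q.s a) (a :: l) v

/-- A path in a quiver: a start vertex, a compatible list of arrows, and an end vertex. -/
structure Quiv.QPath (Q : Quiv) where
  src : Q.V
  arrows : List Q.A
  tgt : Q.V
  isPath : Q.IsPathFrom src arrows tgt

theorem Quiv.IsPathFrom.append {Q : Quiv} {u v w : Q.V} {l l' : List Q.A}
    (h1 : Q.IsPathFrom u l v) : Q.IsPathFrom v l' w → Q.IsPathFrom u (l ++ l') w := by
  induction h1 with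
  | nil _ => exact id
  | cons a _ ih => exact fun h2 => .cons a (ih h2)

/-- The lazy path at a vertex. -/
def Quiv.QPath.lazy (Q : Quiv) (v : Q.V) : Q.QPath := ⟨v, [], v, .nil v⟩

/-- Concatenation of composable paths. -/
def Quiv.QPath.comp {Q : Quiv} (p q : Q.QPath) (h : p.tgt = q.src) : Q.QPath :=
  ⟨p.src, p.arrows ++ q.arrows, q.tgt, p.isPath.append (h.symm ▸ q.isPath)⟩

/-- The length-one path given by a single arrow. -/
def Quiv.QPath.ofArrow (Q : Quiv) (a : Q.A) : Q.QPath :=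
  ⟨Q.s a, [a], Q.t a, .cons a (.nil _)⟩

/-- A path algebra of the quiver `Q` over `F`: an `F`-algebra `A` together with a basis
`b` indexed by the paths of `Q`, multiplying by concatenation. -/
structure PathAlgebra (F : Type) [Field F] (Q : Quiv) (A : Type) [Ring A] [Algebra F A] where
  b : Q.QPath → A
  indep : LinearIndependent F b
  spans : Submodule.span F (Set.range b) = ⊤
  mul_comp : ∀ (p q : Q.QPath) (h : p.tgt = q.src), b p * b q = b (p.comp q h)
  mul_zero : ∀ p q : Q.QPath, p.tgt ≠ q.src → b p * b q = 0
  sum_lazy : ∑ v : Q.V, b (Quiv.QPath.lazy Q v) = 1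

/-- `f` is a polynomial identity for the `F`-algebra `A`. -/
def IsPolyId (F : Type) [Field F] (A : Type) [Ring A] [Algebra F A]
    (f : FreeAlgebra F ℕ) : Prop :=
  ∀ φ : FreeAlgebra F ℕ →ₐ[F] A, φ f = 0

/-- `A` is a PI algebra: it has a nonzero polynomial identity. -/
def IsPI (F : Type) [Field F] (A : Type) [Ring A] [Algebra F A] : Prop :=
  ∃ f : FreeAlgebra F ℕ, f ≠ 0 ∧ IsPolyId F A f

/-- A cycle: a nonempty closed path with pairwise distinct source vertices. -/
def Quiv.QPath.IsCycle {Q : Quiv} (c : Q.QPath) : Prop :=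
  c.arrows ≠ [] ∧ c.tgt = c.src ∧ (c.arrows.map Q.s).Nodup

/-- The standard identity `St_N` holds in `A`. -/
def SatisfiesStandardIdentity (A : Type) [Ring A] (N : ℕ) : Prop :=
  ∀ a : Fin N → A,
    ∑ σ : Equiv.Perm (Fin N), (Equiv.Perm.sign σ : ℤ) • (List.ofFn fun i => a (σ i)).prod = 0

section BlockLemmas

variable {α β : Type} {m : α → β} {v : β}

/-- A "block": a nonempty list whose head is marked `v` and no other element is. -/
def IsVBlock (m : α → β) (v : β) (l : List α) : Prop :=
  ∃ a r, l = a :: r ∧ m a = v ∧ ∀ x ∈ r, m x ≠ v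

theorem head_of_flatten {B : List (List α)}
    (hB : ∀ l ∈ B, IsVBlock m v l) {c : α} {t : List α}
    (h : B.flatten = c :: t) : m c = v := by
  cases B with
  | nil => simp at h
  | cons l B =>
    obtain ⟨a, r, rfl, ha, -⟩ := hB _ List.mem_cons_self
    rw [List.flatten_cons, List.cons_append] at h
    injection h with h1 _
    rw [← h1]; exact ha

theorem eq_of_block_prefix {B B' : List (List α)} {l l' : List α}
    (hl : IsVBlock m v l) (hl' : IsVBlock m v l')
    (hB : ∀ x ∈ B, IsVBlock m v x)
    (h : l ++ B.flatten = l' ++ B'.flatten) (hle : l.length ≤ l'.length) :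
    l = l' := by
  have p1 : l <+: l' ++ B'.flatten := by rw [← h]; exact List.prefix_append _ _
  have hpre : l <+: l' :=
    List.prefix_of_prefix_length_le p1 (List.prefix_append _ _) hle
  obtain ⟨c, rfl⟩ := hpre
  cases c with
  | nil => simp
  | cons c₀ cr =>
    exfalso
    rw [List.append_assoc] at h
    have hBf : B.flatten = c₀ :: (cr ++ B'.flatten) := by
      have := List.append_cancel_left h
      simpa using this
    have hc₀ : m c₀ = v := head_of_flatten hB hBf
    obtain ⟨a, r, hl'eq, ha, hr⟩ := hl'
    obtain ⟨a', r', rfl, ha', hr'⟩ := hl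
    rw [List.cons_append] at hl'eq
    injection hl'eq with h1 h2
    exact hr c₀ (by rw [← h2]; simp) hc₀

theorem flatten_blocks_inj : ∀ {B₁ B₂ : List (List α)},
    (∀ l ∈ B₁, IsVBlock m v l) → (∀ l ∈ B₂, IsVBlock m v l) →
    B₁.flatten = B₂.flatten → B₁ = B₂ := by
  intro B₁
  induction B₁ with
  | nil =>
    intro B₂ _ hB₂ h
    cases B₂ with
    | nil => rfl
    | cons l B =>
      obtain ⟨a, r, rfl, -, -⟩ := hB₂ _ List.mem_cons_self
      simp at h
  | cons l B ih =>
    intro B₂ hB₁ hB₂ h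
    cases B₂ with
    | nil =>
      obtain ⟨a, r, rfl, -, -⟩ := hB₁ _ List.mem_cons_self
      simp at h
    | cons l' B' =>
      rw [List.flatten_cons, List.flatten_cons] at h
      have hbl : IsVBlock m v l := hB₁ _ List.mem_cons_self
      have hbl' : IsVBlock m v l' := hB₂ _ List.mem_cons_self
      have hBtail : ∀ x ∈ B, IsVBlock m v x := fun x hx => hB₁ _ (List.mem_cons_of_mem _ hx)
      have hB'tail : ∀ x ∈ B', IsVBlock m v x := fun x hx => hB₂ _ (List.mem_cons_of_mem _ hx)
      have hll' : l = l' := by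
        rcases le_total l.length l'.length with hle | hle
        · exact eq_of_block_prefix hbl hbl' hBtail h hle
        · exact (eq_of_block_prefix hbl' hbl hB'tail h.symm hle).symm
      subst hll'
      have := List.append_cancel_left h
      rw [ih hBtail hB'tail this]

theorem flatten_map_inj {γ : Type} {J : γ → List α}
    (hblocks : ∀ x, IsVBlock m v (J x)) (hJ : Function.Injective J) :
    Function.Injective (fun L : List γ => (L.map J).flatten) := by
  intro L₁ L₂ h
  have h1 : ∀ l ∈ L₁.map J, IsVBlock m v l := by
    intro l hl; obtain ⟨x, -, rfl⟩ := List.mem_map.mp hl; exact hblocks x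
  have h2 : ∀ l ∈ L₂.map J, IsVBlock m v l := by
    intro l hl; obtain ⟨x, -, rfl⟩ := List.mem_map.mp hl; exact hblocks x
  exact (List.map_injective_iff.mpr hJ) (flatten_blocks_inj h1 h2 h)

end BlockLemmas

section PathLemmas

theorem Quiv.QPath.ext' {Q : Quiv} {p q : Q.QPath} (h1 : p.src = q.src)
    (h2 : p.arrows = q.arrows) (h3 : p.tgt = q.tgt) : p = q := by
  cases p; cases q
  dsimp at h1 h2 h3
  subst h1; subst h2; subst h3
  rfl

theorem Quiv.IsPathFrom.src_eq {Q : Quiv} {u w : Q.V} {a : Q.A} {l : List Q.A}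
    (h : Q.IsPathFrom u (a :: l) w) : Q.s a = u := by
  cases h; rfl

theorem cycle_block {Q : Quiv} {c : Q.QPath} {v : Q.V}
    (h : c.IsCycle) (hv : c.src = v) : IsVBlock Q.s v c.arrows := by
  obtain ⟨hne, _, hnd⟩ := h
  have hp := c.isPath
  rw [hv] at hp
  cases harr : c.arrows with
  | nil => exact absurd harr hne
  | cons a r =>
    rw [harr] at hp hnd
    have ha : Q.s a = v := hp.src_eq
    refine ⟨a, r, rfl, ha, ?_⟩
    intro x hx hxv
    rw [List.map_cons, List.nodup_cons] at hnd
    apply hnd.1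
    rw [ha, ← hxv]
    exact List.mem_map_of_mem (f := Q.s) hx

/-- The path obtained by concatenating the cycles `c i` along a word `w`. -/
def wordPath (Q : Quiv) (v : Q.V) (c : Fin 2 → Q.QPath)
    (hc : ∀ i, Q.IsPathFrom v (c i).arrows v) (w : List (Fin 2)) : Q.QPath :=
  ⟨v, (w.map fun i => (c i).arrows).flatten, v, by
    induction w with
    | nil => exact .nil v
    | cons i w ih => exact (hc i).append ih⟩

theorem wordPath_injective {Q : Quiv} (v : Q.V) (c : Fin 2 → Q.QPath)
    (hc : ∀ i, Q.IsPathFrom v (c i).arrows v)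
    (hblocks : ∀ i, IsVBlock Q.s v (c i).arrows)
    (harr : Function.Injective fun i => (c i).arrows) :
    Function.Injective (wordPath Q v c hc) := by
  intro w w' h
  have : ((w.map fun i => (c i).arrows).flatten) = (w'.map fun i => (c i).arrows).flatten :=
    congrArg Quiv.QPath.arrows h
  exact flatten_map_inj hblocks harr this

end PathLemmas

section AlgLemmas

variable {F : Type} [Field F] {Q : Quiv} {A : Type} [Ring A] [Algebra F A]

theorem b_mul_wordPath (P : PathAlgebra F Q A) (v : Q.V) (c : Fin 2 → Q.QPath)
    (hc : ∀ i, Q.IsPathFrom v (c i).arrows v) (w w' : List (Fin 2)) :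
    P.b (wordPath Q v c hc w) * P.b (wordPath Q v c hc w') =
      P.b (wordPath Q v c hc (w ++ w')) := by
  rw [P.mul_comp _ _ rfl]
  congr 1
  refine Quiv.QPath.ext' rfl ?_ rfl
  simp [Quiv.QPath.comp, wordPath]

theorem lift_prod (P : PathAlgebra F Q A) (v : Q.V) (c : Fin 2 → Q.QPath)
    (hc : ∀ i, Q.IsPathFrom v (c i).arrows v) {X : Type} (J : X → List (Fin 2))
    (w : List (Fin 2)) (l : List X) :
    P.b (wordPath Q v c hc w) *
      (FreeAlgebra.lift F fun x => P.b (wordPath Q v c hc (J x)))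
        ((l.map (FreeAlgebra.ι F)).prod) =
      P.b (wordPath Q v c hc (w ++ (l.map J).flatten)) := by
  induction l generalizing w with
  | nil => simp
  | cons x l ih =>
    rw [List.map_cons, List.prod_cons, map_mul, FreeAlgebra.lift_ι_apply, ← mul_assoc,
      b_mul_wordPath, ih, List.map_cons, List.flatten_cons, List.append_assoc]

theorem basisFreeMonoid_apply (F : Type) [Field F] (X : Type) (w : FreeMonoid X) :
    FreeAlgebra.basisFreeMonoid F X w = ((FreeMonoid.toList w).map (FreeAlgebra.ι F)).prod := by
  have key : ∀ w : FreeMonoid X,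
      FreeAlgebra.equivMonoidAlgebraFreeMonoid (R := F) (X := X)
        (((FreeMonoid.toList w).map (FreeAlgebra.ι F)).prod) = MonoidAlgebra.single w 1 := by
    intro w
    induction w using FreeMonoid.recOn with
    | one => simp [MonoidAlgebra.one_def]
    | of_mul x xs ih =>
      rw [show FreeMonoid.toList (FreeMonoid.of x * xs) = x :: FreeMonoid.toList xs from rfl,
        List.map_cons, List.prod_cons, map_mul, ih]
      have hι : FreeAlgebra.equivMonoidAlgebraFreeMonoid (R := F) (X := X)
          (FreeAlgebra.ι F x) = MonoidAlgebra.single (FreeMonoid.of x) 1 := by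
        simp [FreeAlgebra.equivMonoidAlgebraFreeMonoid]
      rw [hι, MonoidAlgebra.single_mul_single, one_mul]
  rw [FreeAlgebra.basisFreeMonoid, Module.Basis.map_apply, Finsupp.coe_basisSingleOne]
  exact (AlgEquiv.symm_apply_eq _).mpr (key w).symm

theorem inj_of_basis_indep {M N ι : Type} [AddCommGroup M] [Module F M]
    [AddCommGroup N] [Module F N] (bas : Module.Basis ι F M) (f : M →ₗ[F] N)
    (h : LinearIndependent F (f ∘ bas)) : Function.Injective f := by
  rw [← LinearMap.ker_eq_bot]
  rw [LinearMap.ker_eq_bot']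
  intro x hx
  have hx' : Finsupp.linearCombination F (f ∘ bas) (bas.repr x) = 0 := by
    rw [← Finsupp.apply_linearCombination, bas.linearCombination_repr, hx]
  have : bas.repr x = 0 := linearIndependent_iff.mp h _ hx'
  have := congrArg (Finsupp.linearCombination F (⇑bas)) this
  rwa [bas.linearCombination_repr, map_zero] at this

theorem lift_injective_generic (P : PathAlgebra F Q A) (v : Q.V) (c : Fin 2 → Q.QPath)
    (hc : ∀ i, Q.IsPathFrom v (c i).arrows v)
    (hW : Function.Injective (wordPath Q v c hc))
    {X : Type} (J : X → List (Fin 2))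
    (hJ : Function.Injective fun L : List X => (L.map J).flatten) :
    Function.Injective (FreeAlgebra.lift F fun x => P.b (wordPath Q v c hc (J x))) := by
  have hψ : Function.Injective
      ((LinearMap.mulLeft F (P.b (wordPath Q v c hc []))) ∘ₗ
        ((FreeAlgebra.lift F fun x => P.b (wordPath Q v c hc (J x)) :
          FreeAlgebra F X →ₐ[F] A)).toLinearMap) := by
    apply inj_of_basis_indep (FreeAlgebra.basisFreeMonoid F X)
    have heq : (((LinearMap.mulLeft F (P.b (wordPath Q v c hc []))) ∘ₗ
        ((FreeAlgebra.lift F fun x => P.b (wordPath Q v c hc (J x)) :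
          FreeAlgebra F X →ₐ[F] A)).toLinearMap) ∘ (FreeAlgebra.basisFreeMonoid F X)) =
        (P.b ∘ (wordPath Q v c hc) ∘
          ((fun L : List X => (L.map J).flatten) ∘ ⇑FreeMonoid.toList)) := by
      funext w
      simp only [Function.comp_apply, LinearMap.comp_apply, AlgHom.toLinearMap_apply,
        basisFreeMonoid_apply, LinearMap.mulLeft_apply]
      rw [lift_prod P v c hc J [] (FreeMonoid.toList w), List.nil_append]
    rw [heq]
    exact P.indep.comp _ (hW.comp (hJ.comp FreeMonoid.toList.injective))
  intro x y hxy
  exact hψ (by simp only [LinearMap.comp_apply, AlgHom.toLinearMap_apply, hxy])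

end AlgLemmas

/-- If `c₁ ≠ c₂` are two cycles based at the same vertex `v`, then the
algebra map from the free algebra on two generators sending the generators to `b c₁`, `b c₂`
is injective; consequently the path algebra is not PI. -/
theorem pathAlgebra_not_PI_of_two_cycles (F : Type) [Field F] (Q : Quiv)
    (A : Type) [Ring A] [Algebra F A] (P : PathAlgebra F Q A)
    (v : Q.V) (c₁ c₂ : Q.QPath) (h₁ : c₁.IsCycle) (h₂ : c₂.IsCycle)
    (hv₁ : c₁.src = v) (hv₂ : c₂.src = v) (hne : c₁ ≠ c₂) :
    Function.Injective
      (FreeAlgebra.lift F ![P.b c₁, P.b c₂] : FreeAlgebra F (Fin 2) →ₐ[F] A) ∧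
    ¬ IsPI F A := by
  classical
  set c : Fin 2 → Q.QPath := ![c₁, c₂] with hc_def
  have hcyc : ∀ i, (c i).IsCycle := by
    intro i; fin_cases i
    · simpa [hc_def] using h₁
    · simpa [hc_def] using h₂
  have hsrc : ∀ i, (c i).src = v := by
    intro i; fin_cases i
    · simpa [hc_def] using hv₁
    · simpa [hc_def] using hv₂
  have hc : ∀ i, Q.IsPathFrom v (c i).arrows v := by
    intro i
    have h := (c i).isPath
    rw [(hcyc i).2.1, hsrc i] at h
    exact h
  have hblocks : ∀ i, IsVBlock Q.s v (c i).arrows := fun i => cycle_block (hcyc i) (hsrc i)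
  have hcinj : Function.Injective c := by
    intro i j hij
    fin_cases i <;> fin_cases j
    · rfl
    · exact absurd hij hne
    · exact absurd hij.symm hne
    · rfl
  have harr : Function.Injective fun i => (c i).arrows := by
    intro i j hij
    exact hcinj (Quiv.QPath.ext' ((hsrc i).trans (hsrc j).symm) hij
      (by rw [(hcyc i).2.1, (hcyc j).2.1, hsrc i, hsrc j]))
  have hW := wordPath_injective v c hc hblocks harr
  constructor
  · have hflat : ∀ L : List (Fin 2), (L.map (fun i => [i])).flatten = L := by
      intro L; induction L with
      | nil => rfl
      | cons a L ih => simp [ih]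
    have hJ2 : Function.Injective fun L : List (Fin 2) =>
        (L.map (fun i : Fin 2 => [i])).flatten := by
      have h : (fun L : List (Fin 2) => (L.map (fun i : Fin 2 => [i])).flatten) = id :=
        funext hflat
      rw [h]; exact Function.injective_id
    have hinj := lift_injective_generic P v c hc hW (fun i : Fin 2 => [i]) hJ2
    have hfun : (![P.b c₁, P.b c₂] : Fin 2 → A) =
        fun x : Fin 2 => P.b (wordPath Q v c hc [x]) := by
      funext x
      fin_cases x
      · exact congrArg P.b (Quiv.QPath.ext' hv₁ (by simp [wordPath, hc_def])
          (h₁.2.1.trans hv₁))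
      · exact congrArg P.b (Quiv.QPath.ext' hv₂ (by simp [wordPath, hc_def])
          (h₂.2.1.trans hv₂))
    rw [hfun]
    exact hinj
  · rintro ⟨f, hf0, hid⟩
    have hwb : ∀ i : ℕ, IsVBlock (id : Fin 2 → Fin 2) 1 ((1 : Fin 2) :: List.replicate i 0) := by
      intro i
      exact ⟨1, List.replicate i 0, rfl, rfl, by
        intro x hx
        rw [List.eq_of_mem_replicate hx]
        decide⟩
    have hwinj : Function.Injective fun i : ℕ => (1 : Fin 2) :: List.replicate i 0 := by
      intro i j h
      have := congrArg List.length h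
      simpa using this
    have hJ : Function.Injective fun L : List ℕ =>
        (L.map fun i : ℕ => (1 : Fin 2) :: List.replicate i 0).flatten :=
      flatten_map_inj hwb hwinj
    have hinj := lift_injective_generic P v c hc hW
      (fun i : ℕ => (1 : Fin 2) :: List.replicate i 0) hJ
    exact hf0 (hinj (by rw [hid _, map_zero]))
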